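/- Let F be a CDF on [0,1] with density f, median θ_μ > 1/2, satisfying ∫₀^{1-θ_μ}(1 - F(θ_μ+t) - F(θ_μ-t))dt ≤ 0. Then the function G(θ_s) := ∫_{θ_s}^1 -(v - θ_s)² f(v) dv + (θ_μ - θ_s)² is nonincreasing in θ_s on [0, 2θ_μ - 1]. -/

import Mathlib

open MeasureTheory intervalIntegral Set

/-- For a CDF `F` on `[0,1]` with density `f`, median `θμ > 1/2`,
and skewness condition, `G(θs) = ∫_{θs}^1 -(v - θs)² f(v) dv + (θμ - θs)²`
is nonincreasing in `θs` on `[0, 2θμ - 1]`. -/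
theorem G_antitone
    (F f : ℝ → ℝ) (θμ : ℝ)
    (hF : ∀ x, HasDerivAt F (f x) x)
    (hf : Continuous f)
    (hfpos : ∀ x ∈ Set.Icc (0:ℝ) 1, 0 < f x)
    (hF0 : F 0 = 0) (hF1 : F 1 = 1)
    (hmed : F θμ = 1/2) (hθμ : 1/2 < θμ) (hθμ1 : θμ ≤ 1)
    (hskew : (∫ t in (0:ℝ)..(1 - θμ), (1 - F (θμ + t) - F (θμ - t))) ≤ 0) :
    AntitoneOn (fun θs => (∫ v in θs..1, -(v - θs)^2 * f v) + (θμ - θs)^2)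
      (Set.Icc (0:ℝ) (2*θμ - 1)) := by
  have hFc : Continuous F := continuous_iff_continuousAt.mpr fun x => (hF x).continuousAt
  have hf2 : Continuous (fun v : ℝ => v^2 * f v) := by fun_prop
  have hf1 : Continuous (fun v : ℝ => v * f v) := by fun_prop
  -- FTC derivative building blocks
  have hA : ∀ x : ℝ, HasDerivAt (fun u => ∫ v in u..(1:ℝ), v^2 * f v) (-(x^2 * f x)) x :=
    fun x => intervalIntegral.integral_hasDerivAt_left (hf2.intervalIntegrable _ _)
      (hf2.stronglyMeasurableAtFilter _ _) hf2.continuousAt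
  have hB : ∀ x : ℝ, HasDerivAt (fun u => ∫ v in u..(1:ℝ), v * f v) (-(x * f x)) x :=
    fun x => intervalIntegral.integral_hasDerivAt_left (hf1.intervalIntegrable _ _)
      (hf1.stronglyMeasurableAtFilter _ _) hf1.continuousAt
  have hC : ∀ x : ℝ, HasDerivAt (fun u => ∫ v in u..(1:ℝ), f v) (-(f x)) x :=
    fun x => intervalIntegral.integral_hasDerivAt_left (hf.intervalIntegrable _ _)
      (hf.stronglyMeasurableAtFilter _ _) hf.continuousAt
  -- rewrite G
  have hEq : (fun θs => (∫ v in θs..1, -(v - θs)^2 * f v) + (θμ - θs)^2)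
      = fun θs => -(∫ v in θs..(1:ℝ), v^2 * f v) + 2*θs*(∫ v in θs..(1:ℝ), v * f v)
          - θs^2*(∫ v in θs..(1:ℝ), f v) + (θμ - θs)^2 := by
    funext u
    have h1 : (∫ v in u..(1:ℝ), -(v - u)^2 * f v)
        = ∫ v in u..(1:ℝ), (-(v^2 * f v) + ((2*u)*(v * f v) + (-(u^2))*(f v))) := by
      congr 1; funext v; ring
    rw [h1, intervalIntegral.integral_add ((show Continuous fun v => -(v^2 * f v) from hf2.neg).intervalIntegrable _ _)
        ((show Continuous fun v => (2*u)*(v * f v) + (-(u^2))*(f v) from (continuous_const.mul hf1).add (continuous_const.mul hf)).intervalIntegrable _ _),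
      intervalIntegral.integral_add ((show Continuous fun v => (2*u)*(v * f v) from continuous_const.mul hf1).intervalIntegrable _ _)
        ((show Continuous fun v => (-(u^2))*(f v) from continuous_const.mul hf).intervalIntegrable _ _),
      intervalIntegral.integral_neg, intervalIntegral.integral_const_mul,
      intervalIntegral.integral_const_mul]
    ring
  have hderiv : ∀ x : ℝ, HasDerivAt
      (fun θs => (∫ v in θs..1, -(v - θs)^2 * f v) + (θμ - θs)^2)
      (2*(∫ v in x..(1:ℝ), v * f v) - 2*x*(∫ v in x..(1:ℝ), f v) - 2*(θμ - x)) x := by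
    intro x
    rw [hEq]
    have h := ((((hA x).neg.add (((hasDerivAt_id x).const_mul 2).mul (hB x))).sub
        ((hasDerivAt_pow 2 x).mul (hC x))).add
        (((hasDerivAt_id x).const_sub θμ).pow 2))
    refine h.congr_deriv ?_
    simp only [id_eq, Nat.cast_ofNat, show (2:ℕ) - 1 = 1 from rfl, pow_one]
    ring
  -- F is nonnegative on [0,1]
  have hFnn : ∀ y ∈ Set.Icc (0:ℝ) 1, 0 ≤ F y := by
    have hmono : MonotoneOn F (Set.Icc (0:ℝ) 1) := by
      apply monotoneOn_of_deriv_nonneg (convex_Icc 0 1) hFc.continuousOn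
        (fun y _ => (hF y).differentiableAt.differentiableWithinAt)
      intro y hy
      rw [(hF y).deriv]
      rw [interior_Icc] at hy
      exact (hfpos y (Ioo_subset_Icc_self hy)).le
    intro y hy
    have := hmono (left_mem_Icc.mpr (by norm_num)) hy hy.1
    rwa [hF0] at this
  -- skew condition transformed
  have hsk : (1 - θμ) ≤ (∫ v in (2*θμ-1)..θμ, F v) + ∫ v in θμ..(1:ℝ), F v := by
    have hFca : Continuous (fun t => F (θμ + t)) := hFc.comp (by fun_prop)
    have hFcs : Continuous (fun t => F (θμ - t)) := hFc.comp (by fun_prop)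
    have hsplit : (∫ t in (0:ℝ)..(1 - θμ), (1 - F (θμ + t) - F (θμ - t)))
        = (∫ t in (0:ℝ)..(1 - θμ), (1:ℝ)) - (∫ t in (0:ℝ)..(1 - θμ), F (θμ + t))
          - (∫ t in (0:ℝ)..(1 - θμ), F (θμ - t)) := by
      rw [intervalIntegral.integral_sub
          ((show Continuous fun t => (1:ℝ) - F (θμ + t) from continuous_const.sub hFca).intervalIntegrable _ _) (hFcs.intervalIntegrable _ _),
        intervalIntegral.integral_sub ((continuous_const).intervalIntegrable _ _)
          (hFca.intervalIntegrable _ _)]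
    have e1 : (∫ t in (0:ℝ)..(1 - θμ), F (θμ + t)) = ∫ v in θμ..(1:ℝ), F v := by
      rw [intervalIntegral.integral_comp_add_left F θμ]
      norm_num
    have e2 : (∫ t in (0:ℝ)..(1 - θμ), F (θμ - t)) = ∫ v in (2*θμ-1)..θμ, F v := by
      rw [intervalIntegral.integral_comp_sub_left F θμ]
      ring_nf
    have e3 : (∫ t in (0:ℝ)..(1 - θμ), (1:ℝ)) = 1 - θμ := by simp
    rw [hsplit, e1, e2, e3] at hskew
    linarith
  apply antitoneOn_of_deriv_nonpos (convex_Icc _ _)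
  · exact (continuous_iff_continuousAt.mpr fun x => (hderiv x).continuousAt).continuousOn
  · exact fun x _ => (hderiv x).differentiableAt.differentiableWithinAt
  · intro x hx
    rw [interior_Icc] at hx
    rw [(hderiv x).deriv]
    have hx0 : (0:ℝ) ≤ x := hx.1.le
    have hx1 : x ≤ 2*θμ - 1 := hx.2.le
    -- integration by parts
    have hBC : (∫ v in x..(1:ℝ), v * f v) - x * (∫ v in x..(1:ℝ), f v)
        = ∫ v in x..(1:ℝ), (v - x) * f v := by
      rw [← intervalIntegral.integral_const_mul, ← intervalIntegral.integral_sub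
          (hf1.intervalIntegrable _ _) ((show Continuous fun v => x * f v from continuous_const.mul hf).intervalIntegrable _ _)]
      congr 1; funext v; ring
    have hparts : (∫ v in x..(1:ℝ), (v - x) * f v)
        = (1 - x) * F 1 - (x - x) * F x - ∫ v in x..(1:ℝ), 1 * F v := by
      exact intervalIntegral.integral_mul_deriv_eq_deriv_mul
        (fun t _ => (hasDerivAt_id t).sub_const x) (fun t _ => hF t)
        (continuous_const.intervalIntegrable _ _) (hf.intervalIntegrable _ _)
    have honeF : (∫ v in x..(1:ℝ), 1 * F v) = ∫ v in x..(1:ℝ), F v := by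
      simp
    -- split the integral of F
    have hs1 : (∫ v in x..(2*θμ-1), F v) + (∫ v in (2*θμ-1)..θμ, F v) = ∫ v in x..θμ, F v :=
      intervalIntegral.integral_add_adjacent_intervals
        (hFc.intervalIntegrable _ _) (hFc.intervalIntegrable _ _)
    have hs2 : (∫ v in x..θμ, F v) + (∫ v in θμ..(1:ℝ), F v) = ∫ v in x..(1:ℝ), F v :=
      intervalIntegral.integral_add_adjacent_intervals
        (hFc.intervalIntegrable _ _) (hFc.intervalIntegrable _ _)
    have hnn : 0 ≤ ∫ v in x..(2*θμ-1), F v := by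
      apply intervalIntegral.integral_nonneg hx1
      intro u hu
      exact hFnn u ⟨le_trans hx0 hu.1, le_trans hu.2 (by linarith)⟩
    rw [hF1] at hparts
    nlinarith [hparts, hBC, honeF, hs1, hs2, hnn, hsk]
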